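/- The ZMod 2-linear span of the weight-3 vectors e_{c₁} + e_{c₂} + e_{c₁+c₂}, taken over all distinct c₁, c₂ ∈ V* with c₁ + c₂ ≠ 0 (where e_c : V* → ZMod 2 is the indicator function of c), equals the dual code of the simplex code, i.e., the set of all y : V* → ZMod 2 with Σ_{c ∈ V*} y(c)·z(c) = 0 for every z ∈ C_S(b). -/
import Mathlib

private lemma zmod2_ne_zero : ∀ (a : ZMod 2), a ≠ 0 → a = 1 := by decide

private lemma zmod2_add_eq_zero_iff : ∀ (a c : ZMod 2), a + c = 0 ↔ a = c := by decide

private lemma zmod2_self_eq_add : ∀ (a c : ZMod 2), a = a + c → c = 0 := by decide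

private lemma zmod2_add_one_ne : ∀ (a : ZMod 2), a ≠ 0 → a + 1 = 0 := by decide

private lemma zmod2_three_sum : ∀ (u v : ZMod 2), u + v + (u + v) = 0 := by decide

private lemma zmod2_cancel : ∀ (u v : ZMod 2), u + (v + v) = u := by decide

/-- The `ZMod 2`-linear span of the weight-3 vectors
`e_{c₁} + e_{c₂} + e_{c₁+c₂}` (over all distinct `c₁, c₂ ∈ V*` with `c₁ + c₂ ≠ 0`)
equals the dual code of the simplex code, i.e. the set of all `y : V* → ZMod 2` with
`∑_{c ∈ V*} y c * z c = 0` for every `z ∈ C_S(b) = range Φ_E`. -/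
theorem span_weight_three_checks_eq_dual_of_simplex (b : ℕ) (hb : 1 ≤ b)
    (ΦB : GaloisField 2 b ≃ₗ[ZMod 2] (Fin b → ZMod 2))
    (ΦE : GaloisField 2 b → ({v : Fin b → ZMod 2 // v ≠ 0} → ZMod 2))
    (hΦE : ∀ (X : GaloisField 2 b) (c : {v : Fin b → ZMod 2 // v ≠ 0}),
      ΦE X c = ∑ e : Fin b, (c : Fin b → ZMod 2) e * ΦB X e) :
    (Submodule.span (ZMod 2)
        {y : {v : Fin b → ZMod 2 // v ≠ 0} → ZMod 2 |
          ∃ (c₁ c₂ : {v : Fin b → ZMod 2 // v ≠ 0}) (_ : c₁ ≠ c₂)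
            (hs : (c₁ : Fin b → ZMod 2) + (c₂ : Fin b → ZMod 2) ≠ 0),
            y = Pi.single c₁ 1 + Pi.single c₂ 1 +
              Pi.single (⟨(c₁ : Fin b → ZMod 2) + (c₂ : Fin b → ZMod 2), hs⟩ :
                {v : Fin b → ZMod 2 // v ≠ 0}) 1} :
      Set ({v : Fin b → ZMod 2 // v ≠ 0} → ZMod 2)) =
    {y : {v : Fin b → ZMod 2 // v ≠ 0} → ZMod 2 |
      ∀ z ∈ Set.range ΦE, ∑ c : {v : Fin b → ZMod 2 // v ≠ 0}, y c * z c = 0} := by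
  classical
  set S : Set ({v : Fin b → ZMod 2 // v ≠ 0} → ZMod 2) :=
    {y : {v : Fin b → ZMod 2 // v ≠ 0} → ZMod 2 |
      ∃ (c₁ c₂ : {v : Fin b → ZMod 2 // v ≠ 0}) (_ : c₁ ≠ c₂)
        (hs : (c₁ : Fin b → ZMod 2) + (c₂ : Fin b → ZMod 2) ≠ 0),
        y = Pi.single c₁ 1 + Pi.single c₂ 1 +
          Pi.single (⟨(c₁ : Fin b → ZMod 2) + (c₂ : Fin b → ZMod 2), hs⟩ : {v : Fin b → ZMod 2 // v ≠ 0}) 1} with hS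
  -- sum of a `Pi.single` against a linear form
  have hsingle : ∀ (d : {v : Fin b → ZMod 2 // v ≠ 0}) (e : Fin b),
      ∑ c : {v : Fin b → ZMod 2 // v ≠ 0}, (Pi.single d 1 : {v : Fin b → ZMod 2 // v ≠ 0} → ZMod 2) c * (c : Fin b → ZMod 2) e
        = (d : Fin b → ZMod 2) e := by
    intro d e
    rw [Finset.sum_eq_single d]
    · simp
    · intro c _ hc; simp [Pi.single_apply, hc]
    · simp
  -- characterization of the dual condition
  have hchar : ∀ y : {v : Fin b → ZMod 2 // v ≠ 0} → ZMod 2,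
      (∀ z ∈ Set.range ΦE, ∑ c : {v : Fin b → ZMod 2 // v ≠ 0}, y c * z c = 0) ↔
      (∀ e : Fin b, ∑ c : {v : Fin b → ZMod 2 // v ≠ 0}, y c * (c : Fin b → ZMod 2) e = 0) := by
    intro y
    constructor
    · intro h e
      have h1 := h (ΦE (ΦB.symm (Pi.single e 1))) ⟨_, rfl⟩
      have h2 : ∀ c : {v : Fin b → ZMod 2 // v ≠ 0}, ΦE (ΦB.symm (Pi.single e 1)) c = (c : Fin b → ZMod 2) e := by
        intro c
        rw [hΦE]
        simp [Pi.single_apply]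
      simpa [h2] using h1
    · rintro h z ⟨X, rfl⟩
      calc ∑ c : {v : Fin b → ZMod 2 // v ≠ 0}, y c * ΦE X c
          = ∑ c : {v : Fin b → ZMod 2 // v ≠ 0}, ∑ e : Fin b, y c * ((c : Fin b → ZMod 2) e * ΦB X e) := by
            refine Finset.sum_congr rfl fun c _ => ?_
            rw [hΦE, Finset.mul_sum]
        _ = ∑ e : Fin b, ∑ c : {v : Fin b → ZMod 2 // v ≠ 0}, y c * ((c : Fin b → ZMod 2) e * ΦB X e) :=
            Finset.sum_comm
        _ = ∑ e : Fin b, (∑ c : {v : Fin b → ZMod 2 // v ≠ 0}, y c * (c : Fin b → ZMod 2) e) * ΦB X e := by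
            refine Finset.sum_congr rfl fun e _ => ?_
            rw [Finset.sum_mul]
            exact Finset.sum_congr rfl fun c _ => by ring
        _ = 0 := by simp [h]
  -- generators satisfy the kernel condition
  have hgen : ∀ y ∈ S, ∀ e : Fin b, ∑ c : {v : Fin b → ZMod 2 // v ≠ 0}, y c * (c : Fin b → ZMod 2) e = 0 := by
    rintro y ⟨c₁, c₂, hne, hs, rfl⟩ e
    simp only [Pi.add_apply, add_mul, Finset.sum_add_distrib, hsingle]
    exact zmod2_three_sum ((c₁ : Fin b → ZMod 2) e) ((c₂ : Fin b → ZMod 2) e)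
  -- main induction: kernel elements lie in the span
  have main : ∀ n (y : {v : Fin b → ZMod 2 // v ≠ 0} → ZMod 2),
      (Finset.univ.filter fun c => y c ≠ 0).card ≤ n →
      (∀ e : Fin b, ∑ c : {v : Fin b → ZMod 2 // v ≠ 0}, y c * (c : Fin b → ZMod 2) e = 0) →
      y ∈ Submodule.span (ZMod 2) S := by
    intro n
    induction n with
    | zero =>
      intro y hcard _
      have hy : y = 0 := by
        funext c
        show y c = 0
        by_contra hc
        have hmem : c ∈ Finset.univ.filter fun c => y c ≠ 0 := by simp [hc]
        have := Finset.card_pos.mpr ⟨c, hmem⟩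
        omega
      simp [hy]
    | succ n ih =>
      intro y hcard hy
      by_cases h0 : y = 0
      · simp [h0]
      obtain ⟨c₁, hc₁⟩ : ∃ c, y c ≠ 0 := by
        by_contra h
        push_neg at h
        exact h0 (funext h)
      by_cases hone : ∀ c, y c ≠ 0 → c = c₁
      · exfalso
        obtain ⟨e, he⟩ : ∃ e, (c₁ : Fin b → ZMod 2) e ≠ 0 := by
          by_contra h
          push_neg at h
          exact c₁.2 (funext h)
        have h1 := hy e
        rw [Finset.sum_eq_single c₁] at h1
        · rw [zmod2_ne_zero _ hc₁, zmod2_ne_zero _ he] at h1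
          simp at h1
        · intro c _ hc
          have : y c = 0 := by
            by_contra h'; exact hc (hone c h')
          simp [this]
        · simp
      · push_neg at hone
        obtain ⟨c₂, hc₂, hc₂ne⟩ := hone
        have hs : (c₁ : Fin b → ZMod 2) + (c₂ : Fin b → ZMod 2) ≠ 0 := by
          intro h
          apply hc₂ne
          apply Subtype.ext
          funext e
          exact ((zmod2_add_eq_zero_iff _ _).mp (congrFun h e)).symm
        set c₃ : {v : Fin b → ZMod 2 // v ≠ 0} := ⟨(c₁ : Fin b → ZMod 2) + (c₂ : Fin b → ZMod 2), hs⟩ with hc₃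
        have hne12 : c₁ ≠ c₂ := fun h => hc₂ne h.symm
        have hval : ∀ d : {v : Fin b → ZMod 2 // v ≠ 0}, d = c₃ → (d : Fin b → ZMod 2)
            = (c₁ : Fin b → ZMod 2) + (c₂ : Fin b → ZMod 2) := by
          intro d hd; rw [hd]
        have hne13 : c₁ ≠ c₃ := by
          intro h
          apply c₂.2
          funext e
          exact zmod2_self_eq_add _ _ (congrFun (hval c₁ h) e)
        have hne23 : c₂ ≠ c₃ := by
          intro h
          apply c₁.2
          funext e
          have h5 := congrFun (hval c₂ h) e
          rw [Pi.add_apply, add_comm] at h5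
          exact zmod2_self_eq_add _ _ h5
        set g : {v : Fin b → ZMod 2 // v ≠ 0} → ZMod 2 :=
          Pi.single c₁ 1 + Pi.single c₂ 1 + Pi.single c₃ 1 with hg
        have hgS : g ∈ S := ⟨c₁, c₂, hne12, hs, rfl⟩
        set y' := y + g with hy'def
        have hy' : ∀ e : Fin b, ∑ c : {v : Fin b → ZMod 2 // v ≠ 0}, y' c * (c : Fin b → ZMod 2) e = 0 := by
          intro e
          have heq : ∑ c : {v : Fin b → ZMod 2 // v ≠ 0}, y' c * (c : Fin b → ZMod 2) e
              = (∑ c : {v : Fin b → ZMod 2 // v ≠ 0}, y c * (c : Fin b → ZMod 2) e)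
                + ∑ c : {v : Fin b → ZMod 2 // v ≠ 0}, g c * (c : Fin b → ZMod 2) e := by
            rw [← Finset.sum_add_distrib]
            refine Finset.sum_congr rfl fun c _ => ?_
            simp [hy'def, add_mul]
          rw [heq, hy e, hgen g hgS e, add_zero]
        -- support bookkeeping
        set s := Finset.univ.filter fun c => y c ≠ 0 with hsdef
        have hc₁s : c₁ ∈ s := by simp [hsdef, hc₁]
        have hc₂s : c₂ ∈ s := by simp [hsdef, hc₂]
        have hg1 : g c₁ = 1 := by
          simp [hg, Pi.single_apply, hne12, hne13]
        have hg2 : g c₂ = 1 := by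
          simp [hg, Pi.single_apply, hc₂ne, hne23]
        have hgother : ∀ c : {v : Fin b → ZMod 2 // v ≠ 0}, c ≠ c₁ → c ≠ c₂ → c ≠ c₃ → g c = 0 := by
          intro c h1 h2 h3
          simp [hg, Pi.single_apply, h1, h2, h3]
        have hsub : (Finset.univ.filter fun c => y' c ≠ 0)
            ⊆ insert c₃ ((s.erase c₁).erase c₂) := by
          intro c hc
          simp only [Finset.mem_filter, Finset.mem_univ, true_and] at hc
          by_cases h3 : c = c₃
          · simp [h3]
          by_cases h1 : c = c₁
          · exfalso
            apply hc
            rw [hy'def]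
            show y c + g c = 0
            rw [h1, hg1]
            exact zmod2_add_one_ne _ hc₁
          by_cases h2 : c = c₂
          · exfalso
            apply hc
            rw [hy'def]
            show y c + g c = 0
            rw [h2, hg2]
            exact zmod2_add_one_ne _ hc₂
          · have hycc : y' c = y c := by
              show y c + g c = y c
              rw [hgother c h1 h2 h3, add_zero]
            rw [Finset.mem_insert]
            right
            rw [Finset.mem_erase, Finset.mem_erase]
            refine ⟨h2, h1, ?_⟩
            simp only [hsdef, Finset.mem_filter, Finset.mem_univ, true_and]
            rw [← hycc]; exact hc
        have hcard' : (Finset.univ.filter fun c => y' c ≠ 0).card ≤ n := by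
          have h1 := Finset.card_le_card hsub
          have h2 : (insert c₃ ((s.erase c₁).erase c₂)).card
              ≤ ((s.erase c₁).erase c₂).card + 1 := Finset.card_insert_le _ _
          have h3 : c₂ ∈ s.erase c₁ := Finset.mem_erase.mpr ⟨hc₂ne, hc₂s⟩
          have h4 : ((s.erase c₁).erase c₂).card = (s.erase c₁).card - 1 :=
            Finset.card_erase_of_mem h3
          have h5 : (s.erase c₁).card = s.card - 1 := Finset.card_erase_of_mem hc₁s
          have h6 : 1 ≤ (s.erase c₁).card := Finset.card_pos.mpr ⟨c₂, h3⟩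
          have h7 : s.card ≤ n + 1 := hcard
          omega
        have hmem' := ih y' hcard' hy'
        have hyeq : y = y' + g := by
          funext c
          show y c = y c + g c + g c
          rw [add_assoc, zmod2_cancel]
        rw [hyeq]
        exact Submodule.add_mem _ hmem' (Submodule.subset_span hgS)
  -- conclude
  ext y
  simp only [SetLike.mem_coe, Set.mem_setOf_eq]
  rw [hchar y]
  constructor
  · intro hmem
    refine Submodule.span_induction (p := fun y _ =>
      ∀ e : Fin b, ∑ c : {v : Fin b → ZMod 2 // v ≠ 0}, y c * (c : Fin b → ZMod 2) e = 0)
      (fun x hx => hgen x hx) (by simp) ?_ ?_ hmem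
    · intro x z _ _ hx hz e
      have heq : ∑ c : {v : Fin b → ZMod 2 // v ≠ 0}, (x + z) c * (c : Fin b → ZMod 2) e
          = (∑ c : {v : Fin b → ZMod 2 // v ≠ 0}, x c * (c : Fin b → ZMod 2) e)
            + ∑ c : {v : Fin b → ZMod 2 // v ≠ 0}, z c * (c : Fin b → ZMod 2) e := by
        rw [← Finset.sum_add_distrib]
        exact Finset.sum_congr rfl fun c _ => by simp [add_mul]
      rw [heq, hx e, hz e, add_zero]
    · intro a x _ hx e
      have heq : ∑ c : {v : Fin b → ZMod 2 // v ≠ 0}, (a • x) c * (c : Fin b → ZMod 2) e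
          = a * ∑ c : {v : Fin b → ZMod 2 // v ≠ 0}, x c * (c : Fin b → ZMod 2) e := by
        rw [Finset.mul_sum]
        exact Finset.sum_congr rfl fun c _ => by simp [mul_assoc]
      rw [heq, hx e, mul_zero]
  · intro h
    exact main (Finset.univ.filter fun c => y c ≠ 0).card y le_rfl h
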